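/- (Dwass formula) Let τ be a GW tree with critical or sub-critical offspring distribution p, and let (ζ_k, k∈ℕ*) be i.i.d. random variables with law p, S_n = Σ_{k=1}^n ζ_k. Then for every n ≥ 1: P(|τ| = n) = (1/n) P(S_n = n-1). -/

import Mathlib

open MeasureTheory ProbabilityTheory Filter Set
open scoped ENNReal Classical

noncomputable section

namespace GWPaper

/-- Neveu formalism: a rooted planar tree is a prefix-closed set of finite sequences of
positive integers (coded as lists of naturals, label `0` being forbidden), containing the
root `[]`, and such that the children of a vertex `u` are `u ++ [1], …, u ++ [k_u]`. -/
def IsTree (t : Set (List ℕ)) : Prop :=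
  ([] ∈ t) ∧
  (∀ ⦃u v : List ℕ⦄, u ∈ t → v <+: u → v ∈ t) ∧
  (∀ u : List ℕ, u ++ [0] ∉ t) ∧
  (∀ (u : List ℕ) (i : ℕ), 1 ≤ i → u ++ [i + 1] ∈ t → u ++ [i] ∈ t)

/-- A tree is locally finite when every vertex has finitely many children. -/
def LocFinite (t : Set (List ℕ)) : Prop :=
  ∀ u : List ℕ, {i : ℕ | u ++ [i] ∈ t}.Finite

/-- `𝕋`: the set of locally finite trees. -/
def TT : Set (Set (List ℕ)) := {t | IsTree t ∧ LocFinite t}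

/-- `𝕋₀`: the set of finite trees. -/
def TT0 : Set (Set (List ℕ)) := {t | IsTree t ∧ t.Finite}

/-- `k_u(t)`: the number of children of `u` in `t`. -/
def kdeg (t : Set (List ℕ)) (u : List ℕ) : ℕ := {i : ℕ | u ++ [i] ∈ t}.ncard

/-- `r_h(t)`: the restriction of `t` to the vertices of height at most `h`. -/
def restrict (h : ℕ) (t : Set (List ℕ)) : Set (List ℕ) := {u ∈ t | u.length ≤ h}

/-- `t ∈ 𝕋^{(h)}`: the tree `t` has height at most `h`. -/
def heightLe (h : ℕ) (t : Set (List ℕ)) : Prop := ∀ u ∈ t, u.length ≤ h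

/-- `H(t)`: the height of `t`, an extended natural number. -/
def heightE (t : Set (List ℕ)) : ℕ∞ := ⨆ u ∈ t, (u.length : ℕ∞)

/-- `x` is a leaf of `t`. -/
def IsLeaf (t : Set (List ℕ)) (x : List ℕ) : Prop := x ∈ t ∧ ∀ i : ℕ, x ++ [i] ∉ t

/-- `t ⊛_x t'`: the tree obtained by grafting `t'` on the leaf `x` of `t`. -/
def graft (t : Set (List ℕ)) (x : List ℕ) (t' : Set (List ℕ)) : Set (List ℕ) :=
  t ∪ {w | ∃ u ∈ t', w = x ++ u}

/-- `𝕋(t,x)`: all trees obtained by grafting some tree of `𝕋` on the leaf `x` of `t`. -/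
def graftSet (t : Set (List ℕ)) (x : List ℕ) : Set (Set (List ℕ)) :=
  {s | ∃ t' ∈ TT, s = graft t x t'}

/-- `z_n(t)`: the number of vertices of `t` at height `n`. -/
def zgen (n : ℕ) (t : Set (List ℕ)) : ℕ := {u ∈ t | u.length = n}.ncard

/-- `𝕋₁`: trees of `𝕋` having exactly one infinite spine. -/
def TT1 : Set (Set (List ℕ)) :=
  {t | t ∈ TT ∧ ∃! v : ℕ → ℕ, ∀ n : ℕ, (List.range n).map v ∈ t}

/-- The Galton-Watson weight `∏_{u ∈ t, |u| < h} p(k_u(t))` of a tree cut at height `h`. -/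
def gwWeight (p : ℕ → ℝ≥0∞) (h : ℕ) (t : Set (List ℕ)) : ℝ≥0∞ :=
  ∏ᶠ u ∈ {u ∈ t | u.length < h}, p (kdeg t u)

/-- The Galton-Watson weight `∏_{u ∈ t} p(k_u(t))` of a finite tree. -/
def gwWeight0 (p : ℕ → ℝ≥0∞) (t : Set (List ℕ)) : ℝ≥0∞ :=
  ∏ᶠ u ∈ t, p (kdeg t u)

/-- `τ` is a Galton-Watson tree with offspring distribution `p` under `P`:
it takes values in `𝕋` and `P(r_h(τ) = t) = ∏_{u ∈ t, |u| < h} p(k_u(t))`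
for every `h ≥ 1` and every (finite) tree `t` of height at most `h`. -/
def IsGW {Ω : Type*} [MeasurableSpace Ω] (P : Measure Ω) (p : ℕ → ℝ≥0∞)
    (τ : Ω → Set (List ℕ)) : Prop :=
  (∀ ω, τ ω ∈ TT) ∧
  ∀ h : ℕ, 1 ≤ h → ∀ t ∈ TT0, heightLe h t →
    P {ω | restrict h (τ ω) = t} = gwWeight p h t

/-- `(τs, sp)` is a Kesten tree associated to `p` (with mean `m`) under `P`:
`τs` is the tree, `sp n` is the (unique) special vertex at generation `n`; the special
vertices form an infinite spine and the finite-dimensional distributions are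
`P(r_h(τs) = t, sp h = v) = m^{-h} ∏_{u ∈ t, |u| < h} p(k_u(t))`. -/
def IsKesten {Ω : Type*} [MeasurableSpace Ω] (P : Measure Ω) (p : ℕ → ℝ≥0∞) (m : ℝ≥0∞)
    (τs : Ω → Set (List ℕ)) (sp : Ω → ℕ → List ℕ) : Prop :=
  (∀ ω, τs ω ∈ TT) ∧
  (∀ ω, sp ω 0 = []) ∧
  (∀ ω n, sp ω n ∈ τs ω ∧ (sp ω n).length = n ∧ sp ω n <+: sp ω (n + 1)) ∧
  ∀ (h : ℕ) (t : Set (List ℕ)), t ∈ TT0 → heightLe h t → ∀ v ∈ t, v.length = h →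
    P {ω | restrict h (τs ω) = t ∧ sp ω h = v} = m⁻¹ ^ h * gwWeight p h t


inductive PT : Type
  | node : List PT → PT

namespace PT

mutual
def sz : PT → ℕ
  | .node ts => szL ts + 1
def szL : List PT → ℕ
  | [] => 0
  | t :: ts => sz t + szL ts
end

mutual
def dseq : PT → List ℕ
  | .node ts => ts.length :: dseqL ts
def dseqL : List PT → List ℕ
  | [] => []
  | t :: ts => dseq t ++ dseqL ts
end

lemma dseqL_append (a b : List PT) : dseqL (a ++ b) = dseqL a ++ dseqL b := by
  induction a with
  | nil => simp [dseqL]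
  | cons t ts ih => simp [dseqL, ih]

mutual
lemma length_dseq : ∀ T : PT, T.dseq.length = T.sz
  | .node ts => by simp [dseq, sz, length_dseqL ts]
lemma length_dseqL : ∀ ts : List PT, (dseqL ts).length = szL ts
  | [] => rfl
  | t :: ts => by simp [dseqL, szL, PT.length_dseq t, length_dseqL ts]
end

mutual
lemma sum_dseq : ∀ T : PT, T.dseq.sum + 1 = T.sz
  | .node ts => by
      simp only [dseq, sz, List.sum_cons]
      have := sum_dseqL ts
      omega
lemma sum_dseqL : ∀ ts : List PT, (dseqL ts).sum + ts.length = szL ts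
  | [] => rfl
  | t :: ts => by
      simp only [dseqL, szL, List.sum_append, List.length_cons]
      have h1 := sum_dseq t
      have h2 := sum_dseqL ts
      omega
end

end PT

/-- Łukasiewicz condition: after reading any proper prefix the walk `sum - length` is `≥ 0`,
and the total is `-1`. -/
def Luk (l : List ℕ) : Prop := l.sum + 1 = l.length ∧ ∀ j < l.length, j ≤ (l.take j).sum

/-- `r` is a concatenation of `k` Łukasiewicz blocks: walk reaches `-k` at the end, stays above
before. -/
def Preluk (k : ℕ) (r : List ℕ) : Prop :=
  r.sum + k = r.length ∧ ∀ j < r.length, j < (r.take j).sum + k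

lemma preluk_zero {r : List ℕ} : Preluk 0 r ↔ r = [] := by
  constructor
  · rintro ⟨h1, h2⟩
    cases r with
    | nil => rfl
    | cons x s => exact absurd (h2 0 (by simp)) (by simp)
  · rintro rfl; exact ⟨rfl, by simp⟩

lemma luk_cons {k : ℕ} {r : List ℕ} : Luk (k :: r) ↔ Preluk k r := by
  constructor
  · rintro ⟨h1, h2⟩
    refine ⟨by simp at h1 ⊢; omega, fun j hj => ?_⟩
    have := h2 (j+1) (by simp; omega)
    simp [List.take_succ_cons] at this
    omega
  · rintro ⟨h1, h2⟩
    refine ⟨by simp; omega, fun j hj => ?_⟩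
    cases j with
    | zero => simp
    | succ j' =>
      have := h2 j' (by simp at hj; omega)
      simp [List.take_succ_cons]
      omega

lemma preluk_append {u v : List ℕ} {k : ℕ} (hu : Luk u) (hv : Preluk k v) :
    Preluk (k+1) (u ++ v) := by
  obtain ⟨hu1, hu2⟩ := hu
  obtain ⟨hv1, hv2⟩ := hv
  refine ⟨by simp; omega, fun j hj => ?_⟩
  rcases lt_trichotomy j u.length with h | h | h
  · rw [List.take_append_of_le_length (le_of_lt h)]
    have := hu2 j h
    have : (u.take j).sum ≤ ((u.take j) ++ []).sum := by simp
    have := hu2 j h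
    omega
  · subst h
    rw [List.take_append_of_le_length le_rfl, List.take_length]
    have hv0 : v ≠ [] := by
      intro he; subst he; simp at hj
    have hk : 1 ≤ k := by
      by_contra hk0
      push_neg at hk0
      interval_cases k
      · exact hv0 (preluk_zero.mp ⟨hv1, hv2⟩)
    omega
  · have hj' : j - u.length < v.length := by simp at hj; omega
    have := hv2 (j - u.length) hj'
    rw [List.take_append, List.take_of_length_le (le_of_lt h)]
    simp
    omega

lemma preluk_cons {m x : ℕ} {s : List ℕ} (h : Preluk (m+1) (x :: s)) : Preluk (x + m) s := by
  obtain ⟨h1, h2⟩ := h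
  refine ⟨by simp at h1; omega, fun j hj => ?_⟩
  have := h2 (j+1) (by simp; omega)
  simp [List.take_succ_cons] at this
  omega

mutual
lemma luk_dseq : ∀ T : PT, Luk T.dseq
  | .node ts => by
      rw [PT.dseq, luk_cons]
      exact preluk_dseqL ts
lemma preluk_dseqL : ∀ ts : List PT, Preluk ts.length (PT.dseqL ts)
  | [] => ⟨rfl, by simp [PT.dseqL]⟩
  | t :: ts => by
      rw [PT.dseqL, List.length_cons]
      exact preluk_append (luk_dseq t) (preluk_dseqL ts)
end

lemma preluk_build_aux : ∀ (N : ℕ) (r : List ℕ), r.length ≤ N → ∀ (m : ℕ), Preluk m r →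
    ∃ Ts : List PT, Ts.length = m ∧ PT.dseqL Ts = r := by
  intro N
  induction N with
  | zero =>
    intro r hr m hm
    match m, r with
    | 0, r =>
      obtain rfl := preluk_zero.mp hm
      exact ⟨[], rfl, rfl⟩
    | m+1, [] => exact absurd hm.1 (by simp)
    | m+1, x :: s => simp at hr
  | succ N ih =>
    intro r hr m hm
    match m, r with
    | 0, r =>
      obtain rfl := preluk_zero.mp hm
      exact ⟨[], rfl, rfl⟩
    | m+1, [] => exact absurd hm.1 (by simp)
    | m+1, x :: s =>
      obtain ⟨Ts, hlen, hjoin⟩ := ih s (by simp at hr; omega) (x + m) (preluk_cons hm)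
      refine ⟨PT.node (Ts.take x) :: Ts.drop x, by simp [hlen], ?_⟩
      have hx : x ≤ Ts.length := by omega
      rw [PT.dseqL, PT.dseq]
      rw [List.length_take, min_eq_left hx]
      have : PT.dseqL (Ts.take x) ++ PT.dseqL (Ts.drop x) = PT.dseqL Ts := by
        rw [← PT.dseqL_append, List.take_append_drop]
      simp only [List.cons_append]
      rw [this, hjoin]

lemma preluk_build {r : List ℕ} {m : ℕ} (h : Preluk m r) :
    ∃ Ts : List PT, Ts.length = m ∧ PT.dseqL Ts = r :=
  preluk_build_aux r.length r le_rfl m h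

lemma luk_surj {l : List ℕ} (hl : Luk l) : ∃ T : PT, T.dseq = l := by
  match l with
  | [] => exact absurd hl.1 (by simp)
  | k :: r =>
    obtain ⟨Ts, hlen, hjoin⟩ := preluk_build (luk_cons.mp hl)
    exact ⟨PT.node Ts, by rw [PT.dseq, hlen, hjoin]⟩

/-- reverse-Polish stack machine reading the reversed degree sequence -/
def step (st : List PT) (x : ℕ) : List PT := PT.node (st.take x) :: st.drop x

def run (st : List PT) (l : List ℕ) : List PT := l.foldl step st

lemma run_append (st : List PT) (a b : List ℕ) : run st (a ++ b) = run (run st a) b :=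
  List.foldl_append

mutual
lemma run_dseq : ∀ (T : PT) (st : List PT), run st T.dseq.reverse = T :: st
  | .node ts, st => by
      rw [PT.dseq, List.reverse_cons, run_append, run_dseqL ts st]
      simp [run, step]
lemma run_dseqL : ∀ (ts : List PT) (st : List PT), run st (PT.dseqL ts).reverse = ts ++ st
  | [], st => rfl
  | t :: ts, st => by
      rw [PT.dseqL, List.reverse_append, run_append, run_dseqL ts, run_dseq t]
      rfl
end

lemma dseq_injective : Function.Injective PT.dseq := by
  intro T T' h
  have h1 := run_dseq T ([])
  have h2 := run_dseq T' ([])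
  rw [h, h2] at h1
  exact (List.cons.injEq .. ▸ h1).1.symm


namespace PT
lemma sz_pos (T : PT) : 1 ≤ T.sz := by cases T with | node ts => simp [sz]

lemma sz_le_szL {t : PT} {ts : List PT} (h : t ∈ ts) : t.sz ≤ szL ts := by
  induction ts with
  | nil => simp at h
  | cons a as ih =>
    rcases List.mem_cons.mp h with rfl | h
    · simp [szL]
    · have := ih h; simp [szL]; omega

lemma strongInd {motive : PT → Prop}
    (h : ∀ ts : List PT, (∀ t ∈ ts, motive t) → motive (.node ts)) : ∀ T, motive T := by
  have key : ∀ n T, sz T ≤ n → motive T := by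
    intro n
    induction n with
    | zero => intro T h0; exact absurd (sz_pos T) (by omega)
    | succ n ih =>
      intro T hT
      cases T with
      | node ts =>
        refine h ts fun t ht => ih t ?_
        have h1 := sz_le_szL ht
        rw [sz] at hT
        omega
  exact fun T => key (sz T) T le_rfl

end PT

/-- Membership in the Neveu encoding of a planar tree. -/
def memT : List ℕ → PT → Prop
  | [], _ => True
  | (j :: u), .node ts => ∃ h : j - 1 < ts.length, 1 ≤ j ∧ memT u (ts.get ⟨j-1, h⟩)

/-- The Neveu encoding of a planar tree. -/
def enc (T : PT) : Set (List ℕ) := {l | memT l T}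

lemma nil_mem_enc (T : PT) : [] ∈ enc T := by cases T; trivial

lemma enc_node (ts : List PT) :
    enc (.node ts) = {[]} ∪ ⋃ i : Fin ts.length, (List.cons (i.1+1)) '' enc (ts.get i) := by
  ext l
  cases l with
  | nil => simp [enc, memT]
  | cons j u =>
    simp only [enc, memT, Set.mem_setOf_eq, Set.mem_union, Set.mem_singleton_iff,
      Set.mem_iUnion, Set.mem_image]
    constructor
    · rintro ⟨h, hj, hm⟩
      right
      refine ⟨⟨j-1, h⟩, u, hm, ?_⟩
      have hje : j - 1 + 1 = j := by omega
      simp [hje]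
    · rintro (h | ⟨i, u', hm, he⟩)
      · exact absurd h (by simp)
      · obtain ⟨rfl, rfl⟩ : j = i.1 + 1 ∧ u = u' := by
          simpa [List.cons.injEq, eq_comm] using he
        exact ⟨by simpa using i.2, by omega, by simpa using hm⟩

lemma enc_finite (T : PT) : (enc T).Finite := by
  induction T using PT.strongInd with
  | _ ts ih =>
    rw [enc_node]
    refine (Set.finite_singleton _).union (Set.finite_iUnion fun i => ?_)
    exact (ih _ (List.get_mem ts i)).image _

lemma memT_length_lt_sz {u : List ℕ} {T : PT} (h : memT u T) : u.length < T.sz := by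
  induction u generalizing T with
  | nil => exact T.sz_pos
  | cons j v ih =>
    cases T with
    | node ts =>
      obtain ⟨hlt, hj, hm⟩ := h
      have h1 := ih hm
      have h2 := PT.sz_le_szL (List.get_mem ts ⟨j-1, hlt⟩)
      rw [PT.sz]
      simp only [List.length_cons]
      omega

-- ===== IsTree properties of enc =====

lemma memT_of_prefix : ∀ {v u : List ℕ} {T : PT}, memT u T → v <+: u → memT v T := by
  intro v
  induction v with
  | nil => intro u T _ _; cases T; trivial
  | cons j v' ih =>
    rintro u T hu ⟨w, hw⟩
    subst hw
    cases T with
    | node ts =>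
      obtain ⟨h, hj, hm⟩ := hu
      exact ⟨h, hj, ih hm ⟨w, rfl⟩⟩

lemma memT_no_zero : ∀ (u : List ℕ) (T : PT), ¬ memT (u ++ [0]) T := by
  intro u
  induction u with
  | nil => rintro ⟨ts⟩ ⟨h, hj, hm⟩; omega
  | cons j v ih =>
    rintro ⟨ts⟩ ⟨h, hj, hm⟩
    exact ih _ hm

lemma memT_mono : ∀ (u : List ℕ) (i : ℕ), 1 ≤ i → ∀ (T : PT),
    memT (u ++ [i + 1]) T → memT (u ++ [i]) T := by
  intro u
  induction u with
  | nil =>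
    rintro i hi ⟨ts⟩ ⟨h, hj, -⟩
    exact ⟨by omega, by omega, trivial⟩
  | cons j v ih =>
    rintro i hi ⟨ts⟩ ⟨h, hj, hm⟩
    exact ⟨h, hj, ih i hi _ hm⟩

lemma enc_mem_TT0 (T : PT) : enc T ∈ TT0 :=
  ⟨⟨nil_mem_enc T, fun _ _ hu hv => memT_of_prefix hu hv,
    fun u => memT_no_zero u T, fun u i hi h => memT_mono u i hi T h⟩, enc_finite T⟩

-- ===== kdeg of enc =====

lemma kdeg_enc_nil (ts : List PT) : kdeg (enc (.node ts)) ([]) = ts.length := by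
  have : {i : ℕ | [] ++ [i] ∈ enc (.node ts)} = ↑(Finset.Icc 1 ts.length) := by
    ext i
    simp only [List.nil_append, enc, memT, Set.mem_setOf_eq, Finset.coe_Icc, Set.mem_Icc]
    constructor
    · rintro ⟨h, hi, -⟩; omega
    · rintro ⟨h1, h2⟩; exact ⟨by omega, h1, trivial⟩
  rw [kdeg, this, Set.ncard_coe_finset, Nat.card_Icc]
  omega

lemma kdeg_enc_cons (ts : List PT) (j : ℕ) (u : List ℕ) (hj : 1 ≤ j) (h : j - 1 < ts.length) :
    kdeg (enc (.node ts)) (j :: u) = kdeg (enc (ts.get ⟨j-1, h⟩)) u := by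
  have : {i : ℕ | (j :: u) ++ [i] ∈ enc (.node ts)} = {i : ℕ | u ++ [i] ∈ enc (ts.get ⟨j-1, h⟩)} := by
    ext i
    simp only [List.cons_append, enc, memT, Set.mem_setOf_eq]
    constructor
    · rintro ⟨h', -, hm⟩; exact hm
    · intro hm; exact ⟨h, hj, hm⟩
  rw [kdeg, this, kdeg]

-- ===== ncard =====

lemma szL_eq (ts : List PT) : (ts.map PT.sz).sum = PT.szL ts := by
  induction ts with
  | nil => rfl
  | cons a as ihs => simp [PT.szL, ihs]

lemma ncard_iUnion_fin {α : Type*} : ∀ (k : ℕ) (t : Fin k → Set α), (∀ i, (t i).Finite) →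
    Pairwise (Function.onFun Disjoint t) → (⋃ i, t i).ncard = ∑ i, (t i).ncard := by
  intro k
  induction k with
  | zero => intro t _ _; simp
  | succ k ih =>
    intro t hf hd
    have hU : (⋃ i, t i) = t 0 ∪ ⋃ i : Fin k, t i.succ := by
      ext x
      simp only [Set.mem_iUnion, Set.mem_union]
      constructor
      · rintro ⟨i, hi⟩
        rcases Fin.eq_zero_or_eq_succ i with rfl | ⟨j, rfl⟩
        · exact Or.inl hi
        · exact Or.inr ⟨j, hi⟩
      · rintro (h | ⟨j, hj⟩)
        · exact ⟨0, h⟩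
        · exact ⟨j.succ, hj⟩
    have hdisj : Disjoint (t 0) (⋃ i : Fin k, t i.succ) :=
      Set.disjoint_iUnion_right.mpr fun i => hd (Fin.succ_ne_zero i).symm
    have hpd : Pairwise (Function.onFun Disjoint fun i : Fin k => t i.succ) :=
      fun i j hij => hd (fun hs => hij (Fin.succ_injective _ hs))
    rw [hU, Set.ncard_union_eq hdisj (hf 0) (Set.finite_iUnion fun i => hf i.succ),
      ih _ (fun i => hf i.succ) hpd, Fin.sum_univ_succ]

lemma ncard_enc (T : PT) : (enc T).ncard = T.sz := by
  induction T using PT.strongInd with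
  | _ ts ih =>
    rw [enc_node]
    have hdisj : Disjoint {([] : List ℕ)} (⋃ i : Fin ts.length, (List.cons (i.1+1)) '' enc (ts.get i)) := by
      rw [Set.disjoint_iUnion_right]
      intro i
      rw [Set.disjoint_singleton_left]
      rintro ⟨u, -, h⟩
      simp at h
    have hfin : ∀ i : Fin ts.length, ((List.cons (i.1+1)) '' enc (ts.get i)).Finite :=
      fun i => (enc_finite _).image _
    have hpd : Pairwise (Function.onFun Disjoint fun i : Fin ts.length => (List.cons (i.1+1)) '' enc (ts.get i)) := by
      intro i j hij
      simp only [Function.onFun, Set.disjoint_left]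
      rintro l ⟨u, -, rfl⟩ ⟨v, -, hv⟩
      have : i.1 + 1 = j.1 + 1 := (List.cons.injEq .. ▸ hv.symm).1
      exact hij (Fin.ext (by omega))
    rw [Set.ncard_union_eq hdisj (Set.finite_singleton _) (Set.finite_iUnion hfin),
      ncard_iUnion_fin _ _ hfin hpd, Set.ncard_singleton]
    have : ∀ i : Fin ts.length, ((List.cons (i.1+1)) '' enc (ts.get i)).ncard = (ts.get i).sz := by
      intro i
      rw [Set.ncard_image_of_injective _ (fun a b => by simp), ih _ (List.get_mem ts i)]
    rw [Finset.sum_congr rfl (fun i _ => this i)]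
    have hsum : ∑ i : Fin ts.length, (ts.get i).sz = (ts.map PT.sz).sum := by
      simp only [List.get_eq_getElem]
      exact Fin.sum_univ_fun_getElem ts PT.sz
    rw [hsum, szL_eq, PT.sz]
    omega

-- ===== heights =====

lemma enc_nilnode : enc (.node ([])) = {[]} := by
  rw [enc_node]
  simp

lemma heightLe_enc_succ {h : ℕ} {ts : List PT} :
    heightLe (h+1) (enc (.node ts)) ↔ ∀ t ∈ ts, heightLe h (enc t) := by
  constructor
  · intro H t ht u hu
    obtain ⟨i, hi, rfl⟩ := List.mem_iff_get.mp ht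
    have : (i.1+1) :: u ∈ enc (.node ts) := by
      rw [enc_node]
      exact Or.inr (Set.mem_iUnion.mpr ⟨i, u, hu, rfl⟩)
    have := H _ this
    simpa using this
  · intro H l hl
    rw [enc_node] at hl
    rcases hl with h1 | h1
    · simp at h1; simp [h1]
    · obtain ⟨i, u, hu, rfl⟩ := Set.mem_iUnion.mp h1
      have := H _ (List.get_mem ts i) u hu
      simpa using this

lemma heightLe_zero_enc {T : PT} : heightLe 0 (enc T) ↔ T = .node ([]) := by
  constructor
  · intro H
    cases T with
    | node ts =>
      cases ts with
      | nil => rfl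
      | cons a as =>
        have h1 : [1] ∈ enc (.node (a :: as)) := ⟨by simp, le_rfl, trivial⟩
        have := H _ h1
        simp at this
  · rintro rfl
    rw [enc_nilnode]
    rintro u rfl
    simp

-- ===== surjectivity of enc onto TT0 =====

lemma downward_closed_eq_Icc {S : Set ℕ} (hS : S.Finite) (h0 : 0 ∉ S)
    (hd : ∀ i, 1 ≤ i → i + 1 ∈ S → i ∈ S) : S = Set.Icc 1 S.ncard := by
  rcases Set.eq_empty_or_nonempty S with rfl | hne
  · simp
  · have hFne : hS.toFinset.Nonempty := by
      rwa [← Set.Finite.toFinset_nonempty hS] at hne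
    set M := hS.toFinset.max' hFne with hM
    have hMmem : M ∈ S := by
      have := hS.toFinset.max'_mem hFne
      rwa [Set.Finite.mem_toFinset] at this
    have hle : ∀ x ∈ S, x ≤ M := by
      intro x hx
      exact hS.toFinset.le_max' x (hS.mem_toFinset.mpr hx)
    have hdesc : ∀ d, 1 ≤ M - d → M - d ∈ S := by
      intro d
      induction d with
      | zero => intro _; simpa using hMmem
      | succ d ihd =>
        intro hd1
        have h2 : M - d ∈ S := ihd (by omega)
        have he : M - (d+1) + 1 = M - d := by omega
        rw [← he] at h2
        exact hd _ (by omega) h2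
    have hSeq : S = Set.Icc 1 M := by
      ext x
      simp only [Set.mem_Icc]
      constructor
      · intro hx
        exact ⟨by rcases Nat.eq_zero_or_pos x with rfl | h; exact absurd hx h0; exact h, hle x hx⟩
      · rintro ⟨h1, h2⟩
        have := hdesc (M - x) (by omega)
        rwa [Nat.sub_sub_self h2] at this
    have hcard : S.ncard = M := by
      rw [hSeq, ← Finset.coe_Icc, Set.ncard_coe_finset, Nat.card_Icc]
      omega
    rw [hcard, hSeq]

lemma cons_mem_TT0 {t : Set (List ℕ)} (ht : t ∈ TT0) (j : ℕ) (hj : [j] ∈ t) :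
    {u : List ℕ | j :: u ∈ t} ∈ TT0 := by
  obtain ⟨⟨hroot, hpre, hz, hmono⟩, hfin⟩ := ht
  refine ⟨⟨?_, ?_, ?_, ?_⟩, ?_⟩
  · simpa using hj
  · intro u v hu hv
    exact hpre hu (List.cons_prefix_cons.mpr ⟨rfl, hv⟩)
  · intro u hu
    rw [Set.mem_setOf_eq, ← List.cons_append] at hu
    exact hz _ hu
  · intro u i hi hu
    rw [Set.mem_setOf_eq, ← List.cons_append] at hu ⊢
    exact hmono _ i hi hu
  · have : {u : List ℕ | j :: u ∈ t} = (List.cons j) ⁻¹' t := rfl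
    rw [this]
    exact Set.Finite.preimage (Set.injOn_of_injective (fun a b => by simp)) hfin

lemma enc_surj_aux : ∀ (n : ℕ) (t : Set (List ℕ)), t ∈ TT0 → t.ncard ≤ n → ∃ T, enc T = t := by
  intro n
  induction n with
  | zero =>
    intro t ht hle
    have : 0 < t.ncard := Set.ncard_pos ht.2 |>.mpr ⟨[], ht.1.1⟩
    omega
  | succ n ih =>
    intro t ht hle
    obtain ⟨⟨hroot, hpre, hz, hmono⟩, hfin⟩ := ht
    set k := kdeg t ([]) with hk
    have hC : {i : ℕ | [i] ∈ t} = Set.Icc 1 k := by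
      have : ∀ i : ℕ, ([] : List ℕ) ++ [i] = [i] := by simp
      have hCk : k = {i : ℕ | [i] ∈ t}.ncard := by
        rw [hk, kdeg]; simp
      rw [hCk]
      refine downward_closed_eq_Icc ?_ ?_ ?_
      · exact Set.Finite.preimage (f := fun i : ℕ => [i]) (Set.injOn_of_injective (fun a b => by simp)) hfin
      · intro h0
        exact hz ([]) (by simpa using h0)
      · intro i hi hmem
        have := hmono ([]) i hi (by simpa using hmem)
        simpa using this
    have hchild : ∀ i : ℕ, i < k → [i+1] ∈ t := by
      intro i hik
      have : i + 1 ∈ Set.Icc 1 k := by simp; omega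
      rw [← hC] at this
      exact this
    have hsub : ∀ i : ℕ, i < k → {u : List ℕ | (i+1) :: u ∈ t} ∈ TT0 := by
      intro i hik
      exact cons_mem_TT0 ⟨⟨hroot, hpre, hz, hmono⟩, hfin⟩ (i+1) (hchild i hik)
    have hsmall : ∀ i : ℕ, i < k → {u : List ℕ | (i+1) :: u ∈ t}.ncard ≤ n := by
      intro i hik
      have himg : (List.cons (i+1)) '' {u : List ℕ | (i+1) :: u ∈ t} ⊆ t \ {[]} := by
        rintro l ⟨u, hu, rfl⟩
        exact ⟨hu, by simp⟩
      have h1 : {u : List ℕ | (i+1) :: u ∈ t}.ncard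
          = ((List.cons (i+1)) '' {u : List ℕ | (i+1) :: u ∈ t}).ncard :=
        (Set.ncard_image_of_injective _ (fun a b => by simp)).symm
      have h2 := Set.ncard_le_ncard himg (hfin.subset Set.diff_subset)
      have h3 := Set.ncard_diff_singleton_lt_of_mem hroot hfin
      have : (t \ {[]}).ncard = (t \ {([] : List ℕ)}).ncard := rfl
      omega
    have hex : ∀ i : ℕ, i < k → ∃ T, enc T = {u : List ℕ | (i+1) :: u ∈ t} :=
      fun i hik => ih _ (hsub i hik) (hsmall i hik)
    classical
    set g : ℕ → PT := fun i => if hik : i < k then (hex i hik).choose else .node ([]) with hg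
    have hgspec : ∀ i : ℕ, i < k → enc (g i) = {u : List ℕ | (i+1) :: u ∈ t} := by
      intro i hik
      rw [hg]
      simp only [dif_pos hik]
      exact (hex i hik).choose_spec
    refine ⟨.node ((List.range k).map g), ?_⟩
    have hlen : ((List.range k).map g).length = k := by simp
    ext l
    cases l with
    | nil => simpa [enc, memT] using hroot
    | cons j u =>
      simp only [enc, memT, Set.mem_setOf_eq]
      constructor
      · rintro ⟨h, hj, hm⟩
        rw [hlen] at h
        have hj1 : j - 1 < k := h
        have hget : ((List.range k).map g).get ⟨j-1, by rwa [hlen]⟩ = g (j-1) := by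
          simp [List.get_eq_getElem]
        rw [hget] at hm
        have : u ∈ enc (g (j-1)) := hm
        rw [hgspec (j-1) hj1] at this
        have : (j - 1 + 1) :: u ∈ t := this
        have hje : j - 1 + 1 = j := by omega
        rwa [hje] at this
      · intro hju
        have hjC : j ∈ Set.Icc 1 k := by
          rw [← hC]
          exact hpre hju ⟨u, rfl⟩
        simp only [Set.mem_Icc] at hjC
        refine ⟨by rw [hlen]; omega, hjC.1, ?_⟩
        have hget : ((List.range k).map g).get ⟨j-1, by rw [hlen]; omega⟩ = g (j-1) := by
          simp [List.get_eq_getElem]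
        rw [hget]
        show u ∈ enc (g (j-1))
        rw [hgspec (j-1) (by omega)]
        have hje : j - 1 + 1 = j := by omega
        rw [Set.mem_setOf_eq, hje]
        exact hju

lemma enc_surj {t : Set (List ℕ)} (ht : t ∈ TT0) : ∃ T, enc T = t :=
  enc_surj_aux t.ncard t ht le_rfl

lemma enc_cons_eq (ts : List PT) (j : ℕ) (h : j < ts.length) :
    {u : List ℕ | (j+1) :: u ∈ enc (.node ts)} = enc (ts.get ⟨j, h⟩) := by
  ext u
  simp only [Set.mem_setOf_eq, enc, memT]
  constructor
  · rintro ⟨h', -, hm⟩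
    have : (⟨j+1-1, h'⟩ : Fin ts.length) = ⟨j, h⟩ := by simp
    rwa [this] at hm
  · intro hm
    exact ⟨by simpa using h, by omega, by simpa using hm⟩

lemma enc_injective : Function.Injective enc := by
  intro T
  induction T using PT.strongInd with
  | _ ts ih =>
    intro T' h
    cases T' with
    | node ts' =>
      have hlen : ts.length = ts'.length := by
        rw [← kdeg_enc_nil ts, ← kdeg_enc_nil ts', h]
      have hget : ∀ (j : ℕ) (h1 : j < ts.length) (h2 : j < ts'.length),
          ts.get ⟨j,h1⟩ = ts'.get ⟨j,h2⟩ := by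
        intro j h1 h2
        apply ih _ (List.get_mem ts ⟨j, h1⟩)
        rw [← enc_cons_eq ts j h1, ← enc_cons_eq ts' j h2, h]
      congr 1
      exact List.ext_get hlen hget


-- ===== truncated weights on PT =====

def wtc (p : ℕ → ℝ≥0∞) : ℕ → PT → ℝ≥0∞
  | 0, _ => 1
  | (h+1), .node ts => p ts.length * ((ts.map (wtc p h)).prod)

lemma enc_node_sep (ts : List PT) (h : ℕ) :
    {u ∈ enc (.node ts) | u.length < h+1} =
      {([] : List ℕ)} ∪
        ⋃ i : Fin ts.length, (List.cons (i.1+1)) '' {u ∈ enc (ts.get i) | u.length < h} := by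
  ext l
  cases l with
  | nil => simp [enc, memT]
  | cons j u =>
    simp only [Set.mem_setOf_eq, Set.mem_union, Set.mem_singleton_iff, Set.mem_iUnion,
      Set.mem_image, enc, memT, List.length_cons]
    constructor
    · rintro ⟨⟨hlt, hj, hm⟩, hlen⟩
      right
      refine ⟨⟨j-1, hlt⟩, u, ⟨hm, by omega⟩, ?_⟩
      have hje : j - 1 + 1 = j := by omega
      simp [hje]
    · rintro (h1 | ⟨i, u', ⟨hm, hlen⟩, he⟩)
      · exact absurd h1 (by simp)
      · obtain ⟨rfl, rfl⟩ : j = i.1 + 1 ∧ u = u' := by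
          simpa [List.cons.injEq, eq_comm] using he
        exact ⟨⟨by simpa using i.2, by omega, by simpa using hm⟩, by omega⟩

lemma gwWeight_zero (p : ℕ → ℝ≥0∞) (t : Set (List ℕ)) : gwWeight p 0 t = 1 := by
  rw [gwWeight]
  have : {u ∈ t | u.length < 0} = ∅ := by ext u; simp
  rw [this, finprod_mem_empty]

lemma gwWeight_enc (p : ℕ → ℝ≥0∞) : ∀ (T : PT) (h : ℕ),
    gwWeight p h (enc T) = wtc p h T := by
  intro T
  induction T using PT.strongInd with
  | _ ts ih =>
    intro h
    cases h with
    | zero => rw [gwWeight_zero]; rfl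
    | succ h =>
      rw [gwWeight, enc_node_sep, wtc]
      have hfin : ∀ i : Fin ts.length,
          ((List.cons (i.1+1)) '' {u ∈ enc (ts.get i) | u.length < h}).Finite :=
        fun i => (((enc_finite _).subset (Set.sep_subset _ _)).image _)
      have hdisj : Disjoint {([] : List ℕ)}
          (⋃ i : Fin ts.length, (List.cons (i.1+1)) '' {u ∈ enc (ts.get i) | u.length < h}) := by
        rw [Set.disjoint_iUnion_right]
        intro i
        rw [Set.disjoint_singleton_left]
        rintro ⟨u, -, hcon⟩
        simp at hcon
      have hpd : Pairwise (Function.onFun Disjoint fun i : Fin ts.length =>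
          (List.cons (i.1+1)) '' {u ∈ enc (ts.get i) | u.length < h}) := by
        intro i j hij
        simp only [Function.onFun, Set.disjoint_left]
        rintro l ⟨u, -, rfl⟩ ⟨v, -, hv⟩
        have : i.1 + 1 = j.1 + 1 := (List.cons.injEq .. ▸ hv.symm).1
        exact hij (Fin.ext (by omega))
      rw [finprod_mem_union hdisj (Set.finite_singleton _) (Set.finite_iUnion hfin),
        finprod_mem_singleton, kdeg_enc_nil]
      congr 1
      rw [finprod_mem_iUnion hpd hfin]
      have hinner : ∀ i : Fin ts.length,
          (∏ᶠ u ∈ (List.cons (i.1+1)) '' {u ∈ enc (ts.get i) | u.length < h},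
            p (kdeg (enc (.node ts)) u)) = wtc p h (ts.get i) := by
        intro i
        rw [finprod_mem_image (Set.injOn_of_injective (fun a b => by simp))]
        have : ∀ u ∈ {u ∈ enc (ts.get i) | u.length < h},
            p (kdeg (enc (.node ts)) ((i.1+1) :: u)) = p (kdeg (enc (ts.get i)) u) := by
          intro u _
          have h1 : i.1 + 1 - 1 < ts.length := by simpa using i.2
          rw [kdeg_enc_cons ts (i.1+1) u (by omega) h1]
          have h2 : (⟨i.1+1-1, h1⟩ : Fin ts.length) = i := by ext; simp
          rw [h2]
        rw [finprod_mem_congr rfl this, ← gwWeight, ih _ (List.get_mem ts i)]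
      rw [finprod_congr hinner, finprod_eq_prod_of_fintype]
      simp only [List.get_eq_getElem]
      exact Fin.prod_univ_fun_getElem ts (wtc p h)

lemma dseqL_prod (p : ℕ → ℝ≥0∞) : ∀ ts : List PT,
    ((PT.dseqL ts).map p).prod = (ts.map (fun t => ((PT.dseq t).map p).prod)).prod := by
  intro ts
  induction ts with
  | nil => rfl
  | cons a as ihs => simp [PT.dseqL, ihs]

lemma wtc_eq_wt (p : ℕ → ℝ≥0∞) : ∀ (T : PT) (h : ℕ), (∀ u ∈ enc T, u.length < h) →
    wtc p h T = ((T.dseq).map p).prod := by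
  intro T
  induction T using PT.strongInd with
  | _ ts ih =>
    intro h hlt
    cases h with
    | zero => exact absurd (hlt ([]) (nil_mem_enc _)) (by simp)
    | succ h =>
      rw [wtc, PT.dseq, List.map_cons, List.prod_cons]
      congr 1
      rw [dseqL_prod]
      congr 1
      apply List.map_congr_left
      intro t ht
      refine ih t ht h ?_
      intro u hu
      obtain ⟨i, hi, rfl⟩ := List.mem_iff_get.mp ht
      have : (i.1+1) :: u ∈ enc (.node ts) := by
        rw [enc_node]
        exact Or.inr (Set.mem_iUnion.mpr ⟨i, u, hu, rfl⟩)
      have := hlt _ this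
      simp at this
      omega

-- ===== summing weights: ∑ = 1 =====

def nodeEquiv : List PT ≃ PT where
  toFun := PT.node
  invFun := fun T => match T with | .node ts => ts
  left_inv := fun ts => rfl
  right_inv := fun T => match T with | .node ts => rfl

def finConsEquiv (α : Type*) (k : ℕ) : α × (Fin k → α) ≃ (Fin (k+1) → α) :=
  ⟨fun q => Fin.cons q.1 q.2, fun f => (f 0, fun i => f i.succ),
    fun q => by simp, fun f => Fin.cons_self_tail f⟩

lemma tsum_pow {α : Type*} (g : α → ℝ≥0∞) : ∀ k : ℕ,
    ∑' v : Fin k → α, ∏ i, g (v i) = (∑' a, g a) ^ k := by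
  intro k
  induction k with
  | zero =>
    rw [pow_zero]
    have h0 : ∀ v : Fin 0 → α, (∏ i, g (v i)) = 1 := fun v => by simp
    rw [tsum_congr h0]
    exact tsum_eq_single (fun i => i.elim0) (fun b hb => absurd (funext fun i => i.elim0) hb)
  | succ k ihk =>
    rw [← (finConsEquiv α k).tsum_eq]
    have hck : ∀ q : α × (Fin k → α),
        (∏ i, g (finConsEquiv α k q i)) = g q.1 * ∏ i, g (q.2 i) := by
      rintro ⟨a, v⟩
      rw [Fin.prod_univ_succ]
      show g ((Fin.cons a v : Fin (k+1) → α) 0) * ∏ i : Fin k, g ((Fin.cons a v : Fin (k+1) → α) i.succ) = _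
      simp
    rw [tsum_congr hck,
      ENNReal.tsum_prod (f := fun (a : α) (v : Fin k → α) => g a * ∏ i, g (v i))]
    have h2 : ∀ a : α, ∑' v : Fin k → α, g a * ∏ i, g (v i) = g a * (∑' b, g b)^k := by
      intro a
      rw [ENNReal.tsum_mul_left, ihk]
    rw [tsum_congr h2, ENNReal.tsum_mul_right, pow_succ]
    ring

lemma tsum_list_weight {α : Type*} (g : α → ℝ≥0∞) (q : ℕ → ℝ≥0∞) :
    ∑' l : List α, q l.length * (l.map g).prod = ∑' k, q k * (∑' a, g a)^k := by
  rw [← (List.equivSigmaTuple (α := α)).symm.tsum_eq]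
  have : ∀ σ : (n : ℕ) × (Fin n → α),
      q ((List.equivSigmaTuple (α := α)).symm σ).length *
        ((((List.equivSigmaTuple (α := α)).symm σ).map g).prod) =
      q σ.1 * ∏ i, g (σ.2 i) := by
    rintro ⟨n, v⟩
    simp [List.equivSigmaTuple, List.map_ofFn, List.prod_ofFn, Function.comp]
  rw [tsum_congr this,
    ENNReal.tsum_sigma (f := fun (n : ℕ) (v : Fin n → α) => q n * ∏ i, g (v i))]
  congr 1
  ext k
  rw [ENNReal.tsum_mul_left, tsum_pow]


instance : Countable PT := Function.Injective.countable dseq_injective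

lemma tsum_wtc (p : ℕ → ℝ≥0∞) (hp : ∑' n, p n = 1) : ∀ h : ℕ,
    ∑' T : PT, (if heightLe h (enc T) then wtc p h T else 0) = 1 := by
  intro h
  induction h with
  | zero =>
    rw [tsum_eq_single (PT.node ([])) ?_]
    · rw [if_pos (heightLe_zero_enc.mpr rfl)]
      rfl
    · intro T hT
      rw [if_neg (fun hh => hT (heightLe_zero_enc.mp hh))]
  | succ h ihh =>
    rw [← Equiv.tsum_eq nodeEquiv (fun T => if heightLe (h+1) (enc T) then wtc p (h+1) T else 0)]
    have hterm : ∀ ts : List PT,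
        (if heightLe (h+1) (enc (nodeEquiv ts)) then wtc p (h+1) (nodeEquiv ts) else 0)
        = p ts.length *
            ((ts.map (fun t => if heightLe h (enc t) then wtc p h t else 0)).prod) := by
      intro ts
      show (if heightLe (h+1) (enc (.node ts)) then wtc p (h+1) (.node ts) else 0) = _
      by_cases hc : ∀ t ∈ ts, heightLe h (enc t)
      · rw [if_pos (heightLe_enc_succ.mpr hc), wtc]
        congr 1
        exact congrArg List.prod (List.map_congr_left (fun t ht => (if_pos (hc t ht)).symm))
      · rw [if_neg (fun hh => hc (heightLe_enc_succ.mp hh))]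
        symm
        have : ∃ t0 ∈ ts, ¬ heightLe h (enc t0) := by
          push_neg at hc; exact hc
        obtain ⟨t0, ht0, hc0⟩ := this
        have hz : (0 : ℝ≥0∞) ∈ ts.map (fun t => if heightLe h (enc t) then wtc p h t else 0) := by
          rw [List.mem_map]
          exact ⟨t0, ht0, if_neg hc0⟩
        rw [List.prod_eq_zero hz, mul_zero]
    rw [tsum_congr hterm, tsum_list_weight, ihh]
    simpa using hp

lemma tsum_wtc_subtype (p : ℕ → ℝ≥0∞) (hp : ∑' n, p n = 1) (h : ℕ) :
    ∑' T : {T : PT // heightLe h (enc T)}, wtc p h T.1 = 1 := by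
  calc ∑' T : {T : PT // heightLe h (enc T)}, wtc p h T.1
      = ∑' T : ↥{T : PT | heightLe h (enc T)}, wtc p h T.1 := rfl
    _ = ∑' T : PT, Set.indicator {T : PT | heightLe h (enc T)} (wtc p h) T := tsum_subtype _ _
    _ = ∑' T : PT, (if heightLe h (enc T) then wtc p h T else 0) :=
        tsum_congr (fun T => by rw [Set.indicator_apply]; rfl)
    _ = 1 := tsum_wtc p hp h

-- ===== generic outer-measure partition lemma =====

lemma measure_partition {Ω : Type*} {ι : Type*} [Countable ι] [MeasurableSpace Ω]
    (P : Measure Ω) [IsProbabilityMeasure P] (A : ι → Set Ω)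
    (hcov : ∀ ω, ∃ i, ω ∈ A i)
    (w : ι → ℝ≥0∞) (hw : ∀ i, P (A i) = w i) (hsum : ∑' i, w i = 1)
    (q : ι → Prop) :
    P {ω | ∃ i, q i ∧ ω ∈ A i} = ∑' i : {i // q i}, w i := by
  set U := {ω | ∃ i, q i ∧ ω ∈ A i} with hU
  have hUsub : U ⊆ ⋃ i : {i // q i}, A i.1 := by
    rintro ω ⟨i, hqi, hω⟩
    exact Set.mem_iUnion.mpr ⟨⟨i, hqi⟩, hω⟩
  have hle : P U ≤ ∑' i : {i // q i}, w i := by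
    calc P U ≤ P (⋃ i : {i // q i}, A i.1) := measure_mono hUsub
    _ ≤ ∑' i : {i // q i}, P (A i.1) := measure_iUnion_le _
    _ = ∑' i : {i // q i}, w i := tsum_congr fun i => hw i.1
  have hcle : P Uᶜ ≤ ∑' i : ↥({i : ι | q i}ᶜ), w i := by
    have hsubc : Uᶜ ⊆ ⋃ i : ↥({i : ι | q i}ᶜ), A i.1 := by
      intro ω hω
      obtain ⟨i, hi⟩ := hcov ω
      have hnq : ¬ q i := fun hqi => hω ⟨i, hqi, hi⟩
      exact Set.mem_iUnion.mpr ⟨⟨i, hnq⟩, hi⟩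
    calc P Uᶜ ≤ P (⋃ i : ↥({i : ι | q i}ᶜ), A i.1) := measure_mono hsubc
    _ ≤ ∑' i : ↥({i : ι | q i}ᶜ), P (A i.1) := measure_iUnion_le _
    _ = ∑' i : ↥({i : ι | q i}ᶜ), w i := tsum_congr fun i => hw i.1
  have hsplit : (∑' i : {i // q i}, w i) + (∑' i : ↥({i : ι | q i}ᶜ), w i) = 1 := by
    rw [← hsum]
    exact (Summable.tsum_add_tsum_compl (s := {i : ι | q i}) ENNReal.summable ENNReal.summable)
  have h1 : (1 : ℝ≥0∞) ≤ P U + P Uᶜ := by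
    rw [← measure_univ (μ := P), ← Set.union_compl_self U]
    exact measure_union_le _ _
  have hB : (∑' i : ↥({i : ι | q i}ᶜ), w i) ≠ ∞ := by
    intro hcon
    rw [hcon] at hsplit
    simp at hsplit
  refine le_antisymm hle ?_
  have : (∑' i : {i // q i}, w i) + (∑' i : ↥({i : ι | q i}ᶜ), w i) ≤ P U + (∑' i : ↥({i : ι | q i}ᶜ), w i) := by
    rw [hsplit]
    calc (1:ℝ≥0∞) ≤ P U + P Uᶜ := h1
    _ ≤ P U + ∑' i : ↥({i : ι | q i}ᶜ), w i := add_le_add le_rfl hcle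
  exact ENNReal.le_of_add_le_add_right hB this


lemma gen_finite {t : Set (List ℕ)} (ht : t ∈ TT) : ∀ k, {u ∈ t | u.length = k}.Finite := by
  obtain ⟨⟨hroot, hpre, hz, hmono⟩, hlf⟩ := ht
  intro k
  induction k with
  | zero =>
    refine (Set.finite_singleton ([] : List ℕ)).subset ?_
    rintro u ⟨hu, hl⟩
    simp [List.length_eq_zero_iff.mp hl]
  | succ k ihk =>
    have hsub : {u ∈ t | u.length = k+1} ⊆
        ⋃ u ∈ {u ∈ t | u.length = k}, (fun i => u ++ [i]) '' {i | u ++ [i] ∈ t} := by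
      rintro v ⟨hv, hl⟩
      have hne : v ≠ [] := by intro h; subst h; simp at hl
      refine Set.mem_biUnion (show v.dropLast ∈ t ∧ v.dropLast.length = k from ⟨?_, ?_⟩) ?_
      · exact hpre hv (List.dropLast_prefix v)
      · simp [List.length_dropLast, hl]
      · refine ⟨v.getLast hne, ?_, List.dropLast_append_getLast hne⟩
        show v.dropLast ++ [v.getLast hne] ∈ t
        rw [List.dropLast_append_getLast hne]
        exact hv
    exact (Set.Finite.biUnion ihk (fun u _ => (hlf u).image _)).subset hsub

lemma restrict_mem_TT0 {t : Set (List ℕ)} (ht : t ∈ TT) (h : ℕ) :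
    restrict h t ∈ TT0 ∧ heightLe h (restrict h t) := by
  obtain ⟨⟨hroot, hpre, hz, hmono⟩, hlf⟩ := ht
  refine ⟨⟨⟨⟨hroot, by simp⟩, ?_, ?_, ?_⟩, ?_⟩, ?_⟩
  · rintro u v ⟨hu, hul⟩ hv
    exact ⟨hpre hu hv, le_trans hv.length_le hul⟩
  · rintro u ⟨hu, -⟩
    exact hz u hu
  · rintro u i hi ⟨hu, hul⟩
    refine ⟨hmono u i hi hu, by simpa using hul⟩
  · have hsub : restrict h t ⊆ ⋃ k ∈ Finset.range (h+1), {u ∈ t | u.length = k} := by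
      rintro u ⟨hu, hul⟩
      exact Set.mem_biUnion (Finset.mem_coe.mpr (Finset.mem_range.mpr (by omega))) ⟨hu, rfl⟩
    exact (Set.Finite.biUnion (Finset.range (h+1)).finite_toSet
      (fun k _ => gen_finite ⟨⟨hroot, hpre, hz, hmono⟩, hlf⟩ k)).subset hsub
  · rintro u ⟨-, hul⟩
    exact hul

lemma lhs_eq {Ω : Type*} [MeasurableSpace Ω] (P : Measure Ω) [IsProbabilityMeasure P]
    (p : ℕ → ℝ≥0∞) (hp : ∑' m, p m = 1)
    (τ : Ω → Set (List ℕ)) (hτ : IsGW P p τ) (n : ℕ) (hn : 1 ≤ n) :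
    P {ω | (τ ω).Finite ∧ (τ ω).ncard = n}
      = ∑' T : {T : PT // T.sz = n}, ((T.1.dseq.map p).prod) := by
  set A : {T : PT // heightLe n (enc T)} → Set Ω :=
    fun T => {ω | restrict n (τ ω) = enc T.1} with hA
  have hcov : ∀ ω, ∃ T, ω ∈ A T := by
    intro ω
    obtain ⟨hTT0, hhle⟩ := restrict_mem_TT0 (hτ.1 ω) n
    obtain ⟨T, hT⟩ := enc_surj hTT0
    exact ⟨⟨T, by rw [hT]; exact hhle⟩, by show restrict n (τ ω) = enc T; rw [hT]⟩
  have hw : ∀ T : {T : PT // heightLe n (enc T)}, P (A T) = wtc p n T.1 := by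
    intro T
    rw [← gwWeight_enc]
    exact hτ.2 n hn (enc T.1) (enc_mem_TT0 _) T.2
  have hq := measure_partition P A hcov _ hw (tsum_wtc_subtype p hp n) (fun T => T.1.sz = n)
  have hev : {ω | (τ ω).Finite ∧ (τ ω).ncard = n}
      = {ω | ∃ T, T.1.sz = n ∧ ω ∈ A T} := by
    ext ω
    constructor
    · rintro ⟨hfin, hcard⟩
      have htt0 : τ ω ∈ TT0 := ⟨(hτ.1 ω).1, hfin⟩
      obtain ⟨T, hT⟩ := enc_surj htt0
      have hsz : T.sz = n := by rw [← ncard_enc, hT, hcard]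
      have hlt : ∀ u ∈ enc T, u.length < n := fun u hu => hsz ▸ memT_length_lt_sz hu
      refine ⟨⟨T, fun u hu => le_of_lt (hlt u hu)⟩, hsz, ?_⟩
      show restrict n (τ ω) = enc T
      rw [hT]
      ext u
      refine ⟨fun hu => hu.1, fun hu => ⟨hu, ?_⟩⟩
      rw [← hT] at hu
      exact le_of_lt (hlt u hu)
    · rintro ⟨⟨T, hTle⟩, hsz, hAω⟩
      have hA' : restrict n (τ ω) = enc T := hAω
      have hlt : ∀ u ∈ enc T, u.length < n := fun u hu => hsz ▸ memT_length_lt_sz hu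
      have hall : ∀ u ∈ τ ω, u.length ≤ n → u.length < n := by
        intro u hu hle
        have hmem : u ∈ restrict n (τ ω) := ⟨hu, hle⟩
        rw [hA'] at hmem
        exact hlt u hmem
      have hlen : ∀ u ∈ τ ω, u.length < n := by
        intro u hu
        by_contra hcon
        push_neg at hcon
        have hpref : u.take n ∈ τ ω := (hτ.1 ω).1.2.1 hu (List.take_prefix n u)
        have h1 : (u.take n).length ≤ n := by simp
        have h2 := hall _ hpref h1
        rw [List.length_take] at h2
        omega
      have hteq : τ ω = enc T := by
        rw [← hA']
        ext u
        exact ⟨fun hu => ⟨hu, le_of_lt (hlen u hu)⟩, fun hh => hh.1⟩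
      exact ⟨hteq ▸ enc_finite T, by rw [hteq, ncard_enc, hsz]⟩
  rw [hev, hq]
  let e : {T : {T : PT // heightLe n (enc T)} // T.1.sz = n} ≃ {T : PT // T.sz = n} := by
    refine Equiv.ofBijective (fun x => ⟨x.1.1, x.2⟩) ⟨?_, ?_⟩
    · rintro ⟨⟨T, hT⟩, h1⟩ ⟨⟨T', hT'⟩, h2⟩ hEq
      simp only [Subtype.mk.injEq] at hEq ⊢
      exact hEq
    · rintro ⟨T, hsz⟩
      have hlt : ∀ u ∈ enc T, u.length < n := fun u hu => hsz ▸ memT_length_lt_sz hu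
      exact ⟨⟨⟨T, fun u hu => le_of_lt (hlt u hu)⟩, hsz⟩, rfl⟩
  rw [← e.tsum_eq]
  refine tsum_congr fun x => ?_
  have hlt : ∀ u ∈ enc x.1.1, u.length < n := fun u hu => x.2 ▸ memT_length_lt_sz hu
  have hex : (e x).1 = x.1.1 := rfl
  rw [hex]
  exact wtc_eq_wt p x.1.1 n hlt


-- ===== rotation invariance =====

lemma prod_rotate {M : Type*} [CommMonoid M] (l : List M) (r : ℕ) : (l.rotate r).prod = l.prod := by
  rcases Nat.eq_zero_or_pos l.length with hl | hl
  · rw [List.length_eq_zero_iff.mp hl]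
    simp
  · rw [← List.rotate_mod]
    have hr : r % l.length ≤ l.length := le_of_lt (Nat.mod_lt _ hl)
    rw [List.rotate_eq_drop_append_take hr, List.prod_append, mul_comm, ← List.prod_append,
      List.take_append_drop]

lemma sum_rotate (l : List ℕ) (r : ℕ) : (l.rotate r).sum = l.sum := by
  rcases Nat.eq_zero_or_pos l.length with hl | hl
  · rw [List.length_eq_zero_iff.mp hl]
    simp
  · rw [← List.rotate_mod]
    have hr : r % l.length ≤ l.length := le_of_lt (Nat.mod_lt _ hl)
    rw [List.rotate_eq_drop_append_take hr, List.sum_append, Nat.add_comm, ← List.sum_append,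
      List.take_append_drop]

lemma map_prod_rotate (p : ℕ → ℝ≥0∞) (l : List ℕ) (r : ℕ) :
    ((l.rotate r).map p).prod = (l.map p).prod := by
  rw [List.map_rotate, prod_rotate]

-- ===== tsum helpers =====

lemma tsum_subtype_ite {α : Type*} (c : α → Prop) [DecidablePred c] (f : α → ℝ≥0∞) :
    ∑' x : {x // c x}, f x.1 = ∑' x, if c x then f x else 0 := by
  have h : ∑' x : {x // c x}, f x.1 = ∑' x, Set.indicator {x | c x} f x := tsum_subtype _ _
  rw [h]
  exact tsum_congr fun x => by by_cases hc : c x <;> simp [Set.indicator_apply, hc]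

lemma tsum_subtype_ite' {α : Type*} (c d : α → Prop) [DecidablePred c] [DecidablePred d]
    [∀ x, Decidable (c x ∧ d x)] (f : α → ℝ≥0∞) :
    ∑' x : {x // c x}, (if d x.1 then f x.1 else 0) = ∑' x, if c x ∧ d x then f x else 0 := by
  rw [tsum_subtype_ite c (fun x => if d x then f x else 0)]
  refine tsum_congr fun x => ?_
  by_cases hc : c x <;> by_cases hd : d x <;> simp [hc, hd]

-- ===== tree sum = Łukasiewicz sum =====

lemma tree_sum_eq_luk (p : ℕ → ℝ≥0∞) (n : ℕ) :
    ∑' T : {T : PT // T.sz = n}, ((T.1.dseq.map p).prod)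
      = ∑' l : {l : List ℕ // Luk l ∧ l.length = n}, ((l.1.map p).prod) := by
  let e : {T : PT // T.sz = n} ≃ {l : List ℕ // Luk l ∧ l.length = n} := by
    refine Equiv.ofBijective
      (fun T => ⟨T.1.dseq, luk_dseq T.1, by rw [PT.length_dseq, T.2]⟩) ⟨?_, ?_⟩
    · rintro ⟨T, hT⟩ ⟨T', hT'⟩ hEq
      simp only [Subtype.mk.injEq] at hEq ⊢
      exact dseq_injective hEq
    · rintro ⟨l, hl, hlen⟩
      obtain ⟨T, hT⟩ := luk_surj hl
      refine ⟨⟨T, by rw [← PT.length_dseq, hT, hlen]⟩, ?_⟩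
      simp only [Subtype.mk.injEq]
      exact hT
  rw [← e.tsum_eq]
  exact tsum_congr fun T => rfl

-- ===== walk side =====

lemma walk_eq {Ω' : Type*} [MeasurableSpace Ω'] (P' : Measure Ω') [IsProbabilityMeasure P']
    (p : ℕ → ℝ≥0∞) (ζ : ℕ → Ω' → ℕ) (hmeas : ∀ k, Measurable (ζ k))
    (hindep : iIndepFun ζ P')
    (hlaw : ∀ (k : ℕ) (j : ℕ), P' {ω | ζ k ω = j} = p j) (n : ℕ) (hn : 1 ≤ n) :
    P' {ω | ∑ k ∈ Finset.range n, ζ k ω = n - 1}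
      = ∑' l : {l : List ℕ // l.length = n ∧ l.sum + 1 = n}, ((l.1.map p).prod) := by
  classical
  set B : {v : Fin n → ℕ // ∑ i, v i = n - 1} → Set Ω' :=
    fun v => ⋂ i ∈ Finset.range n,
      (ζ i)⁻¹' (if h : i < n then {v.1 ⟨i, h⟩} else Set.univ) with hB
  have hBmeas : ∀ v, MeasurableSet (B v) := by
    intro v
    refine MeasurableSet.biInter (Finset.range n).countable_toSet fun i _ => ?_
    refine (hmeas i) ?_
    by_cases h : i < n <;> simp [h, measurableSet_singleton]
  have hBmem : ∀ v ω, ω ∈ B v ↔ ∀ i : Fin n, ζ i ω = v.1 i := by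
    intro v ω
    rw [hB]
    simp only [Set.mem_iInter, Set.mem_preimage, Finset.mem_range]
    constructor
    · intro hω i
      have := hω i.1 i.2
      rw [dif_pos i.2] at this
      simpa using this
    · intro hω i hi
      rw [dif_pos hi]
      simpa using hω ⟨i, hi⟩
  have hcover : {ω | ∑ k ∈ Finset.range n, ζ k ω = n - 1} = ⋃ v, B v := by
    ext ω
    simp only [Set.mem_setOf_eq, Set.mem_iUnion]
    constructor
    · intro hω
      have hsum : ∑ i : Fin n, ζ i.1 ω = n - 1 := by
        rw [Fin.sum_univ_eq_sum_range (fun k => ζ k ω) n]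
        exact hω
      refine ⟨⟨fun i => ζ i ω, hsum⟩, ?_⟩
      rw [hBmem]
      intro i
      rfl
    · rintro ⟨v, hv⟩
      rw [hBmem] at hv
      rw [← Fin.sum_univ_eq_sum_range (fun k => ζ k ω) n]
      rw [Finset.sum_congr rfl (fun i _ => hv i)]
      exact v.2
  have hdisj : Pairwise (Function.onFun Disjoint B) := by
    intro v w hvw
    rw [Function.onFun, Set.disjoint_left]
    intro ω hv hw
    rw [hBmem] at hv hw
    apply hvw
    ext i
    rw [← hv i, ← hw i]
  have hBval : ∀ v, P' (B v) = ∏ i : Fin n, p (v.1 i) := by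
    intro v
    rw [hB]
    have := (iIndepFun_iff_measure_inter_preimage_eq_mul.mp hindep) (Finset.range n)
      (sets := fun i => if h : i < n then {v.1 ⟨i, h⟩} else Set.univ)
      (fun i _ => by by_cases h : i < n <;> simp [h, measurableSet_singleton])
    rw [this]
    rw [← Fin.prod_univ_eq_prod_range
      (fun i => P' ((ζ i)⁻¹' (if h : i < n then {v.1 ⟨i, h⟩} else Set.univ))) n]
    refine Finset.prod_congr rfl fun i _ => ?_
    rw [dif_pos i.2]
    have : (ζ i.1)⁻¹' {v.1 ⟨i.1, i.2⟩} = {ω | ζ i.1 ω = v.1 i} := by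
      ext ω; simp
    rw [this, hlaw]
  rw [hcover, measure_iUnion hdisj hBmeas]
  rw [tsum_congr hBval]
  let e : {v : Fin n → ℕ // ∑ i, v i = n - 1} ≃ {l : List ℕ // l.length = n ∧ l.sum + 1 = n} := by
    refine Equiv.ofBijective
      (fun v => ⟨List.ofFn v.1, by simp, by rw [List.sum_ofFn, v.2]; omega⟩) ⟨?_, ?_⟩
    · rintro ⟨v, hv⟩ ⟨w, hw⟩ hEq
      simp only [Subtype.mk.injEq] at hEq ⊢
      exact List.ofFn_injective hEq
    · rintro ⟨l, hlen, hsum⟩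
      refine ⟨⟨fun i => l.get (Fin.cast hlen.symm i), ?_⟩, ?_⟩
      · have : List.ofFn (fun i : Fin n => l.get (Fin.cast hlen.symm i)) = l := by
          subst hlen
          exact List.ofFn_get l
        rw [← List.sum_ofFn, this]
        omega
      · simp only [Subtype.mk.injEq]
        subst hlen
        exact List.ofFn_get l
  rw [← e.tsum_eq]
  refine tsum_congr fun v => ?_
  have : (e v).1 = List.ofFn v.1 := rfl
  rw [this, List.map_ofFn, List.prod_ofFn]
  rfl


-- ===== the cycle lemma =====

/-- partial sums of the Łukasiewicz walk -/
def wS (l : List ℕ) (j : ℕ) : ℤ := ((l.take j).sum : ℤ) - j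

lemma wS_zero (l : List ℕ) : wS l 0 = 0 := by simp [wS]

lemma wS_last {l : List ℕ} {n : ℕ} (hl : l.length = n) (hs : l.sum + 1 = n) :
    wS l n = -1 := by
  rw [wS, ← hl, List.take_length]
  omega

lemma rotTake_le {l : List ℕ} {n r q : ℕ} (hl : l.length = n) (hr : r ≤ n) (hq : q ≤ n - r) :
    (((l.rotate r).take q).sum : ℤ) - q = wS l (r+q) - wS l r := by
  rw [List.rotate_eq_drop_append_take (by omega)]
  rw [List.take_append_of_le_length (by simp [hl]; omega)]
  have h1 : l.take (r+q) = l.take r ++ (l.drop r).take q := List.take_add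
  have h2 : (l.take (r+q)).sum = (l.take r).sum + ((l.drop r).take q).sum := by
    rw [h1, List.sum_append]
  unfold wS
  omega

lemma rotTake_gt {l : List ℕ} {n r q : ℕ} (hl : l.length = n) (hr : r ≤ n) (hq1 : n - r < q)
    (hq2 : q ≤ n) :
    (((l.rotate r).take q).sum : ℤ) - q = wS l n + wS l (q - (n - r)) - wS l r := by
  rw [List.rotate_eq_drop_append_take (by omega)]
  rw [List.take_append]
  rw [List.take_of_length_le (by simp [hl]; omega)]
  have hlen : (l.drop r).length = n - r := by simp [hl]
  rw [hlen, List.take_take]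
  have hmin : min (q - (n - r)) r = q - (n - r) := by omega
  rw [hmin, List.sum_append]
  have h3 := List.sum_take_add_sum_drop l r
  have h4 : (l.take n).sum = l.sum := by rw [← hl, List.take_length]
  unfold wS
  have h5 : (l.take (q - (n-r))).sum = (l.take (q - (n-r))).sum := rfl
  omega

lemma luk_iff_int (g : List ℕ) :
    Luk g ↔ (g.sum + 1 = g.length ∧ ∀ q < g.length, (0:ℤ) ≤ ((g.take q).sum : ℤ) - q) := by
  unfold Luk
  refine and_congr Iff.rfl (forall_congr' fun q => imp_congr Iff.rfl ?_)
  constructor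
  · intro h; omega
  · intro h
    have : (q:ℤ) ≤ ((g.take q).sum : ℤ) := by omega
    exact_mod_cast this

lemma good_iff {l : List ℕ} {n r : ℕ} (hn : 1 ≤ n) (hl : l.length = n) (hs : l.sum + 1 = n)
    (hr : r < n) :
    Luk (l.rotate r) ↔ ((∀ q, q ≤ n - r → q < n → wS l r ≤ wS l (r+q)) ∧
      (∀ i, 0 < i → i < r → wS l r + 1 ≤ wS l i)) := by
  rw [luk_iff_int]
  have hlen : (l.rotate r).length = n := by rw [List.length_rotate, hl]
  have hsumr : (l.rotate r).sum = l.sum := sum_rotate l r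
  have hlast := wS_last hl hs
  rw [hlen, hsumr]
  constructor
  · rintro ⟨-, hcond⟩
    constructor
    · intro q hq hq'
      rcases Nat.eq_or_lt_of_le hq with hq0 | hq0
      · -- q = n - r: r + q = n if r ≥ 1... careful: q = n - r, r + q = n when r ≤ n
        have hrq : r + q = n := by omega
        rw [hrq, hlast]
        -- need wS l r ≤ -1: case r = 0: then q = n, but q < n contradiction
        have hr1 : 1 ≤ r := by omega
        have := hcond (n - r) (by omega)
        rw [rotTake_le hl (by omega) le_rfl] at this
        have hrq2 : r + (n - r) = n := by omega
        rw [hrq2, hlast] at this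
        omega
      · have := hcond q (by omega)
        rw [rotTake_le hl (by omega) hq] at this
        omega
    · intro i hi0 hir
      have hq : n - r < i + (n - r) := by omega
      have := hcond (i + (n - r)) (by omega)
      rw [rotTake_gt hl (by omega) (by omega) (by omega)] at this
      have hieq : i + (n - r) - (n - r) = i := by omega
      rw [hieq, hlast] at this
      omega
  · rintro ⟨hA, hB⟩
    refine ⟨hs, fun q hq => ?_⟩
    by_cases hcase : q ≤ n - r
    · rw [rotTake_le hl (by omega) hcase]
      have := hA q hcase hq
      omega
    · rw [rotTake_gt hl (by omega) (by omega) (by omega)]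
      rw [hlast]
      have := hB (q - (n - r)) (by omega) (by omega)
      omega

lemma key_unique {n : ℕ} {l : List ℕ} (hn : 1 ≤ n) (hl : l.length = n) (hs : l.sum + 1 = n) :
    ∃! r, r < n ∧ Luk (l.rotate r) := by
  classical
  have hne : (Finset.range n).Nonempty := ⟨0, by simp; omega⟩
  set m := (Finset.range n).inf' hne (wS l) with hm
  have hmem : ∃ j, j < n ∧ wS l j = m := by
    obtain ⟨j, hj, hje⟩ := Finset.exists_mem_eq_inf' hne (wS l)
    exact ⟨j, by simpa using hj, hje.symm⟩
  have hmle : ∀ j, j < n → m ≤ wS l j := fun j hj => Finset.inf'_le _ (by simp [hj])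
  have hm0 : m ≤ 0 := by
    have := hmle 0 (by omega)
    rw [wS_zero] at this
    omega
  have hlast := wS_last hl hs
  by_cases hcase : m = 0
  · -- the list itself is Łukasiewicz; unique good rotation r = 0
    refine ⟨0, ⟨by omega, ?_⟩, ?_⟩
    · rw [good_iff hn hl hs (by omega)]
      constructor
      · intro q hq hq'
        rw [wS_zero, Nat.zero_add]
        have := hmle q hq'
        omega
      · intro i hi0 hi
        omega
    · rintro r ⟨hr, hluk⟩
      by_contra hr0
      have hr1 : 1 ≤ r := by omega
      rw [good_iff hn hl hs hr] at hluk
      have := hluk.1 (n - r) le_rfl (by omega)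
      have hrq : r + (n - r) = n := by omega
      rw [hrq, hlast] at this
      have := hmle r hr
      omega
  · have hm1 : m ≤ -1 := by omega
    set r0 := Nat.find hmem with hr0
    obtain ⟨hr0n, hr0m⟩ := Nat.find_spec hmem
    rw [← hr0] at hr0n hr0m
    have hr0min : ∀ i, i < r0 → m < wS l i := by
      intro i hi
      have h1 := Nat.find_min hmem hi
      have h2 : i < n := by omega
      have h3 := hmle i h2
      rcases lt_or_eq_of_le h3 with h | h
      · exact h
      · exact absurd ⟨h2, h.symm⟩ h1
    have hr01 : 1 ≤ r0 := by
      by_contra h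
      have : r0 = 0 := by omega
      rw [this, wS_zero] at hr0m
      omega
    refine ⟨r0, ⟨hr0n, ?_⟩, ?_⟩
    · rw [good_iff hn hl hs hr0n, hr0m]
      constructor
      · intro q hq hq'
        rcases Nat.lt_or_ge (r0 + q) n with h | h
        · exact hmle _ h
        · have : r0 + q = n := by omega
          rw [this, hlast]
          omega
      · intro i hi0 hi
        have := hr0min i hi
        omega
    · rintro r ⟨hr, hluk⟩
      rw [good_iff hn hl hs hr] at hluk
      by_contra hne'
      rcases Nat.lt_or_ge r r0 with hlt | hge
      · -- r < r0
        rcases Nat.eq_zero_or_pos r with rfl | hr1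
        · have := hluk.1 r0 (by omega) (by omega)
          rw [wS_zero, Nat.zero_add, hr0m] at this
          omega
        · have := hluk.1 (r0 - r) (by omega) (by omega)
          have hre : r + (r0 - r) = r0 := by omega
          rw [hre, hr0m] at this
          have := hr0min r hlt
          omega
      · -- r0 < r
        have hlt : r0 < r := by omega
        have := hluk.2 r0 hr01 hlt
        rw [hr0m] at this
        have := hmle r hr
        omega

def rotEquiv (n : ℕ) (hn : 1 ≤ n) (r : ℕ) :
    {l : List ℕ // l.length = n} ≃ {l : List ℕ // l.length = n} where
  toFun := fun x => ⟨x.1.rotate r, by rw [List.length_rotate, x.2]⟩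
  invFun := fun x => ⟨x.1.rotate (n - r % n), by rw [List.length_rotate, x.2]⟩
  left_inv := by
    rintro ⟨x, hx⟩
    simp only [Subtype.mk.injEq, List.rotate_rotate]
    have hdm := Nat.div_add_mod r n
    have hlt : r % n < n := Nat.mod_lt _ (by omega)
    have h1 : r + (n - r % n) = n * (r / n) + n := by omega
    rw [h1, ← List.rotate_mod, hx, Nat.mul_add_mod, Nat.mod_self, List.rotate_zero]
  right_inv := by
    rintro ⟨x, hx⟩
    simp only [Subtype.mk.injEq, List.rotate_rotate]
    have hdm := Nat.div_add_mod r n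
    have hlt : r % n < n := Nat.mod_lt _ (by omega)
    have h1 : (n - r % n) + r = n * (r / n) + n := by omega
    rw [h1, ← List.rotate_mod, hx, Nat.mul_add_mod, Nat.mod_self, List.rotate_zero]

lemma cycle_sum (p : ℕ → ℝ≥0∞) (n : ℕ) (hn : 1 ≤ n) :
    ∑' l : {l : List ℕ // l.length = n ∧ l.sum + 1 = n}, ((l.1.map p).prod)
      = n * ∑' l : {l : List ℕ // Luk l ∧ l.length = n}, ((l.1.map p).prod) := by
  classical
  set w : List ℕ → ℝ≥0∞ := fun l => (l.map p).prod with hw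
  have hLHS : ∑' l : {l : List ℕ // l.length = n ∧ l.sum + 1 = n}, w l.1
      = ∑' x : {l : List ℕ // l.length = n}, (if x.1.sum + 1 = n then w x.1 else 0) := by
    rw [tsum_subtype_ite (fun l : List ℕ => l.length = n ∧ l.sum + 1 = n) w,
      tsum_subtype_ite' (fun l : List ℕ => l.length = n) (fun l => l.sum + 1 = n) w]
  have hRHS : ∑' l : {l : List ℕ // Luk l ∧ l.length = n}, w l.1
      = ∑' x : {l : List ℕ // l.length = n},
          (if x.1.sum + 1 = n ∧ Luk x.1 then w x.1 else 0) := by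
    rw [tsum_subtype_ite (fun l : List ℕ => Luk l ∧ l.length = n) w,
      tsum_subtype_ite' (fun l : List ℕ => l.length = n) (fun l => l.sum + 1 = n ∧ Luk l) w]
    refine tsum_congr fun l => ?_
    refine if_congr ?_ rfl rfl
    constructor
    · rintro ⟨h1, h2⟩
      exact ⟨h2, h1.1.trans h2, h1⟩
    · rintro ⟨h2, h3, h1⟩
      exact ⟨h1, h2⟩
  rw [hLHS, hRHS]
  -- pointwise expansion over rotations
  have hstep : ∀ x : {l : List ℕ // l.length = n},
      (if x.1.sum + 1 = n then w x.1 else 0)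
        = ∑ r ∈ Finset.range n, (if x.1.sum + 1 = n ∧ Luk (x.1.rotate r) then w x.1 else 0) := by
    intro x
    by_cases hsx : x.1.sum + 1 = n
    · rw [if_pos hsx]
      obtain ⟨r0, ⟨hr0n, hr0luk⟩, hr0uniq⟩ := key_unique hn x.2 hsx
      rw [Finset.sum_eq_single r0]
      · rw [if_pos ⟨hsx, hr0luk⟩]
      · intro r hr hrne
        rw [if_neg]
        rintro ⟨-, hluk⟩
        exact hrne (hr0uniq r ⟨Finset.mem_range.mp hr, hluk⟩)
      · intro hcon
        exact absurd (Finset.mem_range.mpr hr0n) hcon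
    · rw [if_neg hsx]
      symm
      refine Finset.sum_eq_zero fun r _ => ?_
      rw [if_neg (fun h => hsx h.1)]
  rw [tsum_congr hstep]
  rw [Summable.tsum_finsetSum (fun r _ => ENNReal.summable)]
  have hrot : ∀ r ∈ Finset.range n,
      ∑' x : {l : List ℕ // l.length = n},
          (if x.1.sum + 1 = n ∧ Luk (x.1.rotate r) then w x.1 else 0)
        = ∑' x : {l : List ℕ // l.length = n},
            (if x.1.sum + 1 = n ∧ Luk x.1 then w x.1 else 0) := by
    intro r _
    rw [← Equiv.tsum_eq (rotEquiv n hn r)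
      (fun x => if x.1.sum + 1 = n ∧ Luk x.1 then w x.1 else 0)]
    refine tsum_congr fun x => ?_
    have h1 : ((rotEquiv n hn r) x).1 = x.1.rotate r := rfl
    rw [h1]
    have h2 : (x.1.rotate r).sum = x.1.sum := sum_rotate x.1 r
    have h3 : w (x.1.rotate r) = w x.1 := map_prod_rotate p x.1 r
    rw [h2, h3]
  rw [Finset.sum_congr rfl hrot, Finset.sum_const, Finset.card_range, nsmul_eq_mul]

/-- Dwass formula: let `τ` be a GW tree with critical or sub-critical
offspring distribution `p`, and `(ζ_k)` i.i.d. with law `p`, `S_n = ζ_1 + ⋯ + ζ_n`.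
Then for every `n ≥ 1`, `P(|τ| = n) = (1/n) P(S_n = n - 1)`. -/
theorem dwass_formula
    {Ω : Type*} [MeasurableSpace Ω] (P : Measure Ω) [IsProbabilityMeasure P]
    {Ω' : Type*} [MeasurableSpace Ω'] (P' : Measure Ω') [IsProbabilityMeasure P']
    (p : ℕ → ℝ≥0∞) (hp : ∑' n, p n = 1)
    (hmean : ∑' n : ℕ, (n : ℝ≥0∞) * p n ≤ 1)
    (τ : Ω → Set (List ℕ)) (hτ : IsGW P p τ)
    (ζ : ℕ → Ω' → ℕ)
    (hmeas : ∀ k, Measurable (ζ k))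
    (hindep : iIndepFun ζ P')
    (hlaw : ∀ (k : ℕ) (j : ℕ), P' {ω | ζ k ω = j} = p j)
    (n : ℕ) (hn : 1 ≤ n) :
    P {ω | (τ ω).Finite ∧ (τ ω).ncard = n} =
      (n : ℝ≥0∞)⁻¹ * P' {ω | ∑ k ∈ Finset.range n, ζ k ω = n - 1} := by
  rw [lhs_eq P p hp τ hτ n hn, tree_sum_eq_luk p n,
    walk_eq P' p ζ hmeas hindep hlaw n hn, cycle_sum p n hn, ← mul_assoc,
    ENNReal.inv_mul_cancel (Nat.cast_ne_zero.mpr (by omega)) (ENNReal.natCast_ne_top n), one_mul]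

end GWPaper
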